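/- Let f : G → ℝⁿ be a continuous vector field with f(0) = 0, and let F : V → ℝ be a differentiable function on a neighborhood V ⊆ G of 0 that is positive definite (F(0)=0, F(x)>0 for x≠0 near 0). Suppose there is a sequence of regular values aᵢ ↓ 0 such that on each hypersurface Hᵢ = boundary of the component of F⁻¹([0,aᵢ]) containing 0, the derivative of F along trajectories satisfies ⟨∇F(x), f(x)⟩ < 0 for all x ∈ Hᵢ. Then the equilibrium 0 is Lyapunov stable. -/

import Mathlib

open Metric Set

/-- Lyapunov stability of the equilibrium `0` of `x' = f x`. -/
def LyapunovStable {n : ℕ} (f : EuclideanSpace ℝ (Fin n) → EuclideanSpace ℝ (Fin n)) : Prop :=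
  ∀ ε > (0 : ℝ), ∃ δ > (0 : ℝ), ∀ x : ℝ → EuclideanSpace ℝ (Fin n),
    (∀ t ≥ (0 : ℝ), HasDerivAt x (f (x t)) t) → ‖x 0‖ < δ → ∀ t ≥ (0 : ℝ), ‖x t‖ < ε

/-- Let `f` be continuous with `f 0 = 0` and `F` a differentiable positive definite
function on a neighborhood `V` of `0`. If there is a strictly decreasing sequence of regular
values `a i → 0`, `a i > 0`, such that on each hypersurface
`H i = frontier` of the connected component of `F⁻¹([0, a i])` containing `0`, the orbital
derivative satisfies `⟪∇F x, f x⟫ < 0`, then the equilibrium `0` is Lyapunov stable. -/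
theorem stmt_5 {n : ℕ} (V : Set (EuclideanSpace ℝ (Fin n))) (hV : IsOpen V)
    (h0V : (0 : EuclideanSpace ℝ (Fin n)) ∈ V)
    (f : EuclideanSpace ℝ (Fin n) → EuclideanSpace ℝ (Fin n))
    (hf : Continuous f) (hf0 : f 0 = 0)
    (F : EuclideanSpace ℝ (Fin n) → ℝ) (hF : DifferentiableOn ℝ F V) (hF0 : F 0 = 0)
    (hFpos : ∀ x ∈ V, x ≠ 0 → 0 < F x)
    (a : ℕ → ℝ) (haanti : StrictAnti a) (hapos : ∀ i, 0 < a i)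
    (halim : Filter.Tendsto a Filter.atTop (nhds 0))
    (hreg : ∀ i, ∀ x ∈ V, F x = a i → gradient F x ≠ 0)
    (H : ℕ → Set (EuclideanSpace ℝ (Fin n)))
    (hH : ∀ i, H i = frontier (connectedComponentIn {x ∈ V | F x ∈ Icc 0 (a i)} 0))
    (hin : ∀ i, ∀ x ∈ H i, inner ℝ (gradient F x) (f x) < (0 : ℝ)) :
    LyapunovStable f := by
  intro ε hε
  rcases subsingleton_or_nontrivial (EuclideanSpace ℝ (Fin n)) with hsub | hnt
  · refine ⟨1, one_pos, fun x _ _ t _ => ?_⟩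
    have hx0 : x t = 0 := Subsingleton.elim _ _
    simpa [hx0] using hε
  -- choose a radius r with closedBall 0 r ⊆ V and r < ε
  obtain ⟨r₀, hr₀, hr₀V⟩ := Metric.nhds_basis_closedBall.mem_iff.1 (hV.mem_nhds h0V)
  set r : ℝ := min r₀ (ε / 2) with hrdef
  have hr0 : 0 < r := lt_min hr₀ (half_pos hε)
  have hrV : closedBall (0 : EuclideanSpace ℝ (Fin n)) r ⊆ V :=
    (closedBall_subset_closedBall (min_le_left _ _)).trans hr₀V
  have hrε : r < ε := (min_le_right _ _).trans_lt (half_lt_self hε)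
  have hFc : ContinuousOn F V := hF.continuousOn
  -- minimum of F on the sphere of radius r
  have hsne : (sphere (0 : EuclideanSpace ℝ (Fin n)) r).Nonempty :=
    NormedSpace.sphere_nonempty.2 hr0.le
  have hsV : sphere (0 : EuclideanSpace ℝ (Fin n)) r ⊆ V :=
    sphere_subset_closedBall.trans hrV
  obtain ⟨z, hz, hzmin⟩ := (isCompact_sphere _ _).exists_isMinOn hsne (hFc.mono hsV)
  have hznorm : ‖z‖ = r := mem_sphere_zero_iff_norm.1 hz
  have hz0 : z ≠ 0 := by
    intro h; rw [h, norm_zero] at hznorm; exact hr0.ne hznorm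
  have hm : 0 < F z := hFpos z (hsV hz) hz0
  obtain ⟨i, hic⟩ : ∃ i, a i < F z := (halim.eventually_lt_const hm).exists
  set c : ℝ := a i with hcdef
  have hc0 : 0 < c := hapos i
  set S : Set (EuclideanSpace ℝ (Fin n)) := {x ∈ V | F x ∈ Icc 0 c} with hSdef
  have h0S : (0 : EuclideanSpace ℝ (Fin n)) ∈ S := ⟨h0V, by simp [hF0, hc0.le]⟩
  set K : Set (EuclideanSpace ℝ (Fin n)) := connectedComponentIn S 0 with hKdef
  have hKS : K ⊆ S := connectedComponentIn_subset _ _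
  have h0K : (0 : EuclideanSpace ℝ (Fin n)) ∈ K := mem_connectedComponentIn h0S
  have hKconn : IsConnected K := isConnected_connectedComponentIn_iff.2 h0S
  have hFnn : ∀ x ∈ V, 0 ≤ F x := by
    intro x hx
    rcases eq_or_ne x 0 with h | h
    · simp [h, hF0]
    · exact (hFpos x hx h).le
  -- K is contained in the ball of radius r
  have hKball : K ⊆ ball (0 : EuclideanSpace ℝ (Fin n)) r := by
    have hsub : K ⊆ ball (0 : EuclideanSpace ℝ (Fin n)) r ∪
        (closedBall (0 : EuclideanSpace ℝ (Fin n)) r)ᶜ := by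
      intro y hy
      rcases lt_trichotomy ‖y‖ r with h | h | h
      · exact Or.inl (mem_ball_zero_iff.2 h)
      · exfalso
        have hys : y ∈ sphere (0 : EuclideanSpace ℝ (Fin n)) r :=
          mem_sphere_zero_iff_norm.2 h
        have h1 : F z ≤ F y := hzmin hys
        have h2 : F y ≤ c := (hKS hy).2.2
        linarith
      · exact Or.inr (by simp [mem_closedBall_zero_iff, not_le, h])
    exact hKconn.isPreconnected.subset_left_of_subset_union isOpen_ball
      Metric.isClosed_closedBall.isOpen_compl
      (disjoint_compl_right.mono_left ball_subset_closedBall) hsub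
      ⟨0, h0K, mem_ball_self hr0⟩
  -- K is closed
  have hclcb : closure K ⊆ closedBall (0 : EuclideanSpace ℝ (Fin n)) r :=
    (closure_mono hKball).trans (by rw [closure_ball _ hr0.ne'])
  have hclS : closure K ⊆ S := by
    intro y hy
    have hyV : y ∈ V := hrV (hclcb hy)
    refine ⟨hyV, ?_⟩
    have hct : ContinuousAt F y := hFc.continuousAt (hV.mem_nhds hyV)
    haveI hnb : (nhdsWithin y K).NeBot := mem_closure_iff_nhdsWithin_neBot.1 hy
    refine isClosed_Icc.mem_of_tendsto
      ((hct.continuousWithinAt : ContinuousWithinAt F K y).tendsto) ?_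
    filter_upwards [self_mem_nhdsWithin] with w hw
    exact (hKS hw).2
  have hKcl : IsClosed K := by
    refine isClosed_of_closure_subset ?_
    exact hKconn.isPreconnected.closure.subset_connectedComponentIn
      (subset_closure h0K) hclS
  -- the open set where F < c
  have hW : IsOpen {x ∈ V | F x < c} := by
    have : {x ∈ V | F x < c} = V ∩ F ⁻¹' Iio c := rfl
    rw [this]
    exact hFc.isOpen_inter_preimage hV isOpen_Iio
  -- on the frontier of K, F = c
  have hfr : ∀ y ∈ frontier K, y ∈ V ∧ F y = c := by
    intro y hy
    rw [hKcl.frontier_eq] at hy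
    obtain ⟨hyK, hyni⟩ := hy
    have hyS := hKS hyK
    refine ⟨hyS.1, ?_⟩
    by_contra hne
    have hlt : F y < c := lt_of_le_of_ne hyS.2.2 hne
    obtain ⟨ρ, hρ0, hρ⟩ := Metric.isOpen_iff.1 hW y ⟨hyS.1, hlt⟩
    have hballS : ball y ρ ⊆ S :=
      fun w hw => ⟨(hρ hw).1, ⟨hFnn w (hρ hw).1, (hρ hw).2.le⟩⟩
    have hballK : ball y ρ ⊆ K := by
      rw [hKdef, connectedComponentIn_eq hyK]
      exact (convex_ball y ρ).isPreconnected.subset_connectedComponentIn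
        (mem_ball_self hρ0) hballS
    exact hyni (mem_interior.2 ⟨ball y ρ, hballK, isOpen_ball, mem_ball_self hρ0⟩)
  -- choose δ
  obtain ⟨δ, hδ0, hδ⟩ := Metric.isOpen_iff.1 hW 0 ⟨h0V, by simpa [hF0] using hc0⟩
  have hδK : ball (0 : EuclideanSpace ℝ (Fin n)) δ ⊆ K :=
    (convex_ball _ _).isPreconnected.subset_connectedComponentIn (mem_ball_self hδ0)
      (fun w hw => ⟨(hδ hw).1, hFnn w (hδ hw).1, (hδ hw).2.le⟩)
  have hδint : ball (0 : EuclideanSpace ℝ (Fin n)) δ ⊆ interior K :=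
    interior_maximal hδK isOpen_ball
  refine ⟨δ, hδ0, fun x hx hx0 => ?_⟩
  suffices hKt : ∀ t ≥ (0 : ℝ), x t ∈ K by
    intro t ht
    exact lt_trans (mem_ball_zero_iff.1 (hKball (hKt t ht))) hrε
  by_contra hcon
  push_neg at hcon
  obtain ⟨t₀, ht₀, ht₀K⟩ := hcon
  set Ex : Set ℝ := {t | 0 ≤ t ∧ x t ∉ K} with hExdef
  have hExne : Ex.Nonempty := ⟨t₀, ht₀, ht₀K⟩
  have hExbd : BddBelow Ex := ⟨0, fun t ht => ht.1⟩
  set T : ℝ := sInf Ex with hTdef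
  have hT0 : 0 ≤ T := le_csInf hExne fun t ht => ht.1
  have hbefore : ∀ s, 0 ≤ s → s < T → x s ∈ K := by
    intro s hs hsT
    by_contra h
    exact absurd (csInf_le hExbd ⟨hs, h⟩) (not_le.2 hsT)
  have hcontx : ∀ t ≥ (0 : ℝ), ContinuousAt x t := fun t ht => (hx t ht).continuousAt
  have hx0K : x 0 ∈ interior K := hδint (mem_ball_zero_iff.2 hx0)
  have hxTK : x T ∈ K := by
    rcases eq_or_lt_of_le hT0 with h | h
    · exact interior_subset (h ▸ hx0K)
    · have htend : Filter.Tendsto x (nhdsWithin T (Iio T)) (nhds (x T)) :=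
        (hcontx T hT0).continuousWithinAt.tendsto
      refine hKcl.mem_of_tendsto htend ?_
      filter_upwards [Ioo_mem_nhdsLT h] with s hs
      exact hbefore s hs.1.le hs.2
  have hxTint : x T ∉ interior K := by
    intro hint
    have hmem : x ⁻¹' interior K ∈ nhds T := (hcontx T hT0) (isOpen_interior.mem_nhds hint)
    obtain ⟨η, hη0, hη⟩ := Metric.mem_nhds_iff.1 hmem
    obtain ⟨e, heEx, heT⟩ := (csInf_lt_iff hExbd hExne).1 (by linarith : T < T + η)
    have heT' : T ≤ e := by
      by_contra h
      exact heEx.2 (hbefore e heEx.1 (not_le.1 h))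
    have : e ∈ ball T η := by
      rw [mem_ball, Real.dist_eq, abs_lt]
      constructor <;> linarith
    exact heEx.2 (interior_subset (hη this))
  have hxTfr : x T ∈ frontier K := by
    rw [hKcl.frontier_eq]; exact ⟨hxTK, hxTint⟩
  have hTpos : 0 < T := by
    rcases eq_or_lt_of_le hT0 with h | h
    · exact absurd (h ▸ hx0K) hxTint
    · exact h
  obtain ⟨hxTV, hxTc⟩ := hfr (x T) hxTfr
  have hxTH : x T ∈ H i := by rw [hH i]; exact hxTfr
  have hL : inner ℝ (gradient F (x T)) (f (x T)) < (0 : ℝ) := hin i _ hxTH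
  -- chain rule
  have hFd : DifferentiableAt ℝ F (x T) := hF.differentiableAt (hV.mem_nhds hxTV)
  have hFder : HasFDerivAt F
      (InnerProductSpace.toDual ℝ _ (gradient F (x T))) (x T) :=
    hasGradientAt_iff_hasFDerivAt.1 hFd.hasGradientAt
  have hcomp : HasDerivAt (fun s => F (x s))
      (inner ℝ (gradient F (x T)) (f (x T)) : ℝ) T := by
    have h := hFder.comp_hasDerivAt T (hx T hT0)
    rw [InnerProductSpace.toDual_apply_apply] at h
    exact h
  have hslope := hasDerivAt_iff_tendsto_slope.1 hcomp
  have hslope' : Filter.Tendsto (slope (fun s => F (x s)) T) (nhdsWithin T (Iio T))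
      (nhds (inner ℝ (gradient F (x T)) (f (x T)) : ℝ)) :=
    hslope.mono_left (nhdsWithin_mono T fun s hs => ne_of_lt hs)
  have hge : (0 : ℝ) ≤ inner ℝ (gradient F (x T)) (f (x T)) := by
    refine ge_of_tendsto hslope' ?_
    filter_upwards [Ioo_mem_nhdsLT hTpos] with s hs
    have hsK : x s ∈ K := hbefore s hs.1.le hs.2
    have hFs : F (x s) ≤ c := (hKS hsK).2.2
    have hsl : slope (fun s => F (x s)) T s = (F (x s) - F (x T)) / (s - T) := by
      simp [slope_def_field]
    rw [hsl, hxTc]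
    apply div_nonneg_of_nonpos <;> linarith [hs.2]
  linarith
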